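/- arXiv:1407.1288 — 8 statements merged into one kernel-verified Lean document; each statement's English description precedes it below -/
import Mathlib

section
/- Let M_n(K) carry the elementary G-grading induced by pairwise distinct elements (g_1,...,g_n). If a, b, c are homogeneous elements of M_n(K) with deg(a) = deg(b) = h and deg(c) = h^{-1} for some h in G, then a c b = b c a. -/
/-- Homogeneous component of degree `h` of the elementary `G`-grading of `Mₙ(K)`
induced by `g : Fin n → G`. -/
def elemComp (K : Type*) [Field K] {G : Type*} [Group G] {n : ℕ} (g : Fin n → G) (h : G) :
    Submodule K (Matrix (Fin n) (Fin n) K) :=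
  Submodule.span K {M | ∃ i j : Fin n, (g i)⁻¹ * g j = h ∧ M = Matrix.single i j 1}

lemma elemComp_apply_eq_zero (K : Type*) [Field K] {G : Type*} [Group G] {n : ℕ}
    (g : Fin n → G) (h : G) {a : Matrix (Fin n) (Fin n) K} (ha : a ∈ elemComp K g h)
    {i j : Fin n} (hij : (g i)⁻¹ * g j ≠ h) : a i j = 0 := by
  induction ha using Submodule.span_induction with
  | mem M hM =>
    obtain ⟨i', j', hdeg, rfl⟩ := hM
    by_cases hi : i' = i
    · by_cases hj : j' = j
      · subst hi; subst hj; exact absurd hdeg hij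
      · simp [Matrix.single, hj]
    · simp [Matrix.single, hi]
  | zero => simp
  | add x y _ _ hx hy => simp [hx, hy]
  | smul r x _ hx => simp [hx]

/-- for pairwise distinct `gᵢ`, if `a, b` are homogeneous of degree `h` and
`c` is homogeneous of degree `h⁻¹`, then `a * c * b = b * c * a`. -/
theorem acb_eq_bca_of_homogeneous
    (K : Type*) [Field K] {G : Type*} [Group G] {n : ℕ} (g : Fin n → G)
    (hg : Function.Injective g) (h : G)
    (a b c : Matrix (Fin n) (Fin n) K)
    (ha : a ∈ elemComp K g h) (hb : b ∈ elemComp K g h) (hc : c ∈ elemComp K g h⁻¹) :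
    a * c * b = b * c * a := by
  ext i l
  have key : ∀ j k : Fin n, a i j * c j k * b k l = b i j * c j k * a k l := by
    intro j k
    by_cases h1 : (g i)⁻¹ * g j = h
    · by_cases h2 : (g j)⁻¹ * g k = h⁻¹
      · have hk : k = i := by
          apply hg
          have : (g i)⁻¹ * g k = 1 := by
            have := congrArg₂ (· * ·) h1 h2
            simpa [mul_assoc] using this
          have := congrArg (g i * ·) this
          simpa using this
        subst hk
        by_cases h3 : (g k)⁻¹ * g l = h
        · have hl : l = j := hg (by rw [← h1] at h3; exact mul_left_cancel h3)
          subst hl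
          ring
        · rw [elemComp_apply_eq_zero K g h hb h3, elemComp_apply_eq_zero K g h ha h3]
          ring
      · rw [elemComp_apply_eq_zero K g h⁻¹ hc h2]; ring
    · rw [elemComp_apply_eq_zero K g h ha h1, elemComp_apply_eq_zero K g h hb h1]; ring
  calc (a * c * b) i l = ∑ k, ∑ j, a i j * c j k * b k l := by
        simp [Matrix.mul_apply, Finset.sum_mul]
    _ = ∑ k, ∑ j, b i j * c j k * a k l := by
        refine Finset.sum_congr rfl fun k _ => Finset.sum_congr rfl fun j _ => key j k
    _ = (b * c * a) i l := by simp [Matrix.mul_apply, Finset.sum_mul]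
end

section
/- With notation as for generic matrices: a product of generic matrices A_{i_1}^{(h_1)} ... A_{i_q}^{(h_q)} is zero if and only if the set L_{(h_1,...,h_q)} = {k in {1,...,n} : g_k h_1...h_a in {g_1,...,g_n} for all a in {1,...,q}} is empty. In particular, whether a monomial x_{i_1}...x_{i_q} with variable degrees (h_1,...,h_q) vanishes under all substitutions by generic matrices depends only on the sequence (h_1,...,h_q) and not on the indices i_1,...,i_q. -/
/-- The generic matrix `A_i^{(h)}` over `Ω = K[Y]`: its `(k, l)` entry is `y^k_{h,i}` if
`g l = g k * h`, and `0` otherwise. -/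
noncomputable def genMat {K : Type*} [Field K] {G : Type*} [Group G] [DecidableEq G] {n : ℕ}
    (g : Fin n → G) (h : G) (i : ℕ) :
    Matrix (Fin n) (Fin n) (MvPolynomial (G × ℕ × Fin n) K) :=
  Matrix.of fun k l => if g k * h = g l then MvPolynomial.X (h, i, k) else 0

/-- The chain condition: starting from row `k`, each successive multiplication by the degrees
in the list stays in the image of `g`. -/
def GoodL {G : Type*} [Group G] {n : ℕ} (g : Fin n → G) : List G → Fin n → Prop
  | [], _ => True
  | h :: t, k => ∃ m, g k * h = g m ∧ GoodL g t m

lemma goodL_exists {G : Type*} [Group G] {n : ℕ} (g : Fin n → G) :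
    ∀ (hs : List G) (k : Fin n), GoodL g hs k → ∃ l, g l = g k * hs.prod := by
  intro hs
  induction hs with
  | nil => intro k _; exact ⟨k, by simp⟩
  | cons a t ih =>
    rintro k ⟨m, hm, hgood⟩
    obtain ⟨l, hl⟩ := ih m hgood
    exact ⟨l, by rw [List.prod_cons, ← mul_assoc, hm, hl]⟩

lemma goodL_iff {G : Type*} [Group G] {n : ℕ} (g : Fin n → G) :
    ∀ (hs : List G) (k : Fin n), GoodL g hs k ↔
      ∀ a : ℕ, a < hs.length → ∃ l, g k * (hs.take (a + 1)).prod = g l := by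
  intro hs
  induction hs with
  | nil => intro k; simp [GoodL]
  | cons b t ih =>
    intro k
    constructor
    · rintro ⟨m, hm, hgood⟩ a ha
      cases a with
      | zero => exact ⟨m, by simpa using hm⟩
      | succ a' =>
        obtain ⟨l, hl⟩ := (ih m).1 hgood a' (by simpa using ha)
        refine ⟨l, ?_⟩
        rw [List.take_succ_cons, List.prod_cons, ← mul_assoc, hm, hl]
    · intro H
      obtain ⟨m, hm⟩ := H 0 (by simp)
      simp only [List.take_succ_cons, List.take_zero, List.prod_cons, List.prod_nil,
        mul_one] at hm
      refine ⟨m, hm, (ih m).2 ?_⟩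
      intro a' ha'
      obtain ⟨l, hl⟩ := H (a' + 1) (by simpa using ha')
      refine ⟨l, ?_⟩
      rw [← hm, mul_assoc, ← List.prod_cons, ← List.take_succ_cons, hl]

lemma prod_apply_ne_zero_iff {K : Type*} [Field K] {G : Type*} [Group G] [DecidableEq G]
    {n : ℕ} (g : Fin n → G) (hg : Function.Injective g) :
    ∀ (L : List (G × ℕ)) (k l : Fin n),
    (L.map fun p => genMat (K := K) g p.1 p.2).prod k l ≠ 0 ↔
      GoodL g (L.map Prod.fst) k ∧ g l = g k * (L.map Prod.fst).prod := by
  intro L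
  induction L with
  | nil =>
    intro k l
    simp only [List.map_nil, List.prod_nil, GoodL, true_and, mul_one]
    rw [Matrix.one_apply, hg.eq_iff]
    by_cases hkl : k = l
    · subst hkl; simp
    · simp only [hkl, if_false]
      exact iff_of_false (by simp) fun e => hkl e.symm
  | cons p t ih =>
    intro k l
    rw [List.map_cons, List.prod_cons, Matrix.mul_apply]
    by_cases hc : ∃ m₀ : Fin n, g k * p.1 = g m₀
    · obtain ⟨m₀, hm₀⟩ := hc
      have hcond : ∀ m : Fin n, (g k * p.1 = g m) ↔ m = m₀ := by
        intro m
        constructor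
        · intro e; exact hg (e.symm.trans hm₀)
        · rintro rfl; exact hm₀
      have hsum : (∑ m, genMat (K := K) g p.1 p.2 k m *
          (t.map fun p => genMat (K := K) g p.1 p.2).prod m l)
          = genMat (K := K) g p.1 p.2 k m₀ *
            (t.map fun p => genMat (K := K) g p.1 p.2).prod m₀ l := by
        refine Finset.sum_eq_single m₀ ?_ (by simp)
        intro m _ hmne
        have hne : ¬ g k * p.1 = g m := fun e => hmne ((hcond m).1 e)
        simp [genMat, hne]
      have hX : genMat (K := K) g p.1 p.2 k m₀ = MvPolynomial.X (p.1, p.2, k) := by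
        simp [genMat, hm₀]
      rw [hsum, hX, mul_ne_zero_iff]
      constructor
      · rintro ⟨-, hP⟩
        obtain ⟨hgood, hl⟩ := (ih m₀ l).1 hP
        refine ⟨⟨m₀, hm₀, hgood⟩, ?_⟩
        rw [hl, List.map_cons, List.prod_cons, ← mul_assoc, hm₀]
      · rintro ⟨⟨m, hm, hgood⟩, hl⟩
        have hmeq : m = m₀ := (hcond m).1 hm
        subst hmeq
        refine ⟨MvPolynomial.X_ne_zero _, (ih m l).2 ⟨hgood, ?_⟩⟩
        rw [hl, List.map_cons, List.prod_cons, ← mul_assoc, hm]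
    · push_neg at hc
      have hzero : ∀ m : Fin n, genMat (K := K) g p.1 p.2 k m = 0 := by
        intro m
        simp [genMat, hc m]
      simp only [hzero, zero_mul, Finset.sum_const_zero, ne_eq, not_true_eq_false, false_iff,
        not_and]
      rintro ⟨m, hm, -⟩ -
      exact hc m hm

lemma prod_eq_zero_iff' {K : Type*} [Field K] {G : Type*} [Group G] [DecidableEq G]
    {n : ℕ} (g : Fin n → G) (hg : Function.Injective g) (L : List (G × ℕ)) :
    (L.map fun p => genMat (K := K) g p.1 p.2).prod = 0 ↔
      ∀ k : Fin n, ¬ GoodL g (L.map Prod.fst) k := by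
  constructor
  · intro hz k hgood
    obtain ⟨l, hl⟩ := goodL_exists g _ k hgood
    exact (prod_apply_ne_zero_iff g hg L k l).2 ⟨hgood, hl⟩
      (by rw [hz]; exact Matrix.zero_apply k l)
  · intro H
    apply Matrix.ext
    intro k l
    rw [Matrix.zero_apply]
    by_contra hne
    exact H k ((prod_apply_ne_zero_iff g hg L k l).1 hne).1

/-- a product of generic matrices of degrees `(h₁, …, h_q)` vanishes iff the set
`L = {k : g k * h₁ ⋯ h_a ∈ {g₁, …, gₙ} for all a}` is empty; in particular vanishing does not
depend on the choice of the indices `i₁, …, i_q`. -/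
theorem prod_genMat_eq_zero_iff
    (K : Type*) [Field K] [Infinite K] {G : Type*} [Group G] [DecidableEq G] {n q : ℕ}
    (g : Fin n → G) (hg : Function.Injective g) (h : Fin q → G) :
    (∀ i : Fin q → ℕ,
      (List.ofFn (fun a : Fin q => genMat (K := K) g (h a) (i a))).prod = 0 ↔
        ¬ ∃ k : Fin n, ∀ a : Fin q, ∃ l : Fin n,
            g k * ((List.ofFn h).take (a.1 + 1)).prod = g l) ∧
    (∀ i i' : Fin q → ℕ,
      ((List.ofFn (fun a : Fin q => genMat (K := K) g (h a) (i a))).prod = 0 ↔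
        (List.ofFn (fun a : Fin q => genMat (K := K) g (h a) (i' a))).prod = 0)) := by
  have key : ∀ i : Fin q → ℕ,
      (List.ofFn (fun a : Fin q => genMat (K := K) g (h a) (i a))).prod = 0 ↔
        ¬ ∃ k : Fin n, ∀ a : Fin q, ∃ l : Fin n,
            g k * ((List.ofFn h).take (a.1 + 1)).prod = g l := by
    intro i
    have hL : List.ofFn (fun a : Fin q => genMat (K := K) g (h a) (i a)) =
        (List.ofFn fun a : Fin q => (h a, i a)).map
          (fun p => genMat (K := K) g p.1 p.2) := by
      rw [List.map_ofFn]; rfl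
    have hfst : (List.ofFn fun a : Fin q => (h a, i a)).map Prod.fst = List.ofFn h := by
      rw [List.map_ofFn]; rfl
    rw [hL, prod_eq_zero_iff' g hg, hfst]
    constructor
    · rintro H ⟨k, hk⟩
      refine H k ((goodL_iff g _ k).2 fun a ha => ?_)
      have ha' : a < q := by simpa using ha
      exact hk ⟨a, ha'⟩
    · intro H k hgood
      exact H ⟨k, fun a => (goodL_iff g _ k).1 hgood a.1 (by rw [List.length_ofFn]; exact a.2)⟩
  exact ⟨key, fun i i' => (key i).trans (key i').symm⟩
end

section
/- Let m-bar = x_{i_0} m and n-bar = x_{i_0} n be two graded monomials starting with the same variable, where m and n are the monomials obtained by deleting the first variable. If there exist generic matrices A_1,...,A_q such that m-bar(A_1,...,A_q) and n-bar(A_1,...,A_q) have the same nonzero entry in the same position, then m(A_1,...,A_q) and n(A_1,...,A_q) also have the same nonzero entry in the same position. -/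
/-- Evaluation of the graded monomial encoded by the word `w` (letters `(h, i)` standing for
the `i`-th variable of degree `h`) at the generic matrices. -/
noncomputable def evalWord (K : Type*) [Field K] {G : Type*} [Group G] [DecidableEq G] {n : ℕ}
    (g : Fin n → G) (w : List (G × ℕ)) :
    Matrix (Fin n) (Fin n) (MvPolynomial (G × ℕ × Fin n) K) :=
  (w.map fun p => genMat (K := K) g p.1 p.2).prod

/-- if two graded monomials starting with the same variable have generic-matrix
evaluations sharing the same nonzero entry in the same position, then the monomials obtained
by deleting the first variable also share a nonzero entry in a common position. -/
theorem evalWord_tail_same_entry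
    (K : Type*) [Field K] [Infinite K] {G : Type*} [Group G] [DecidableEq G] {n : ℕ}
    (g : Fin n → G) (hg : Function.Injective g)
    (p : G × ℕ) (m nn : List (G × ℕ))
    (hexists : ∃ k l : Fin n,
      evalWord K g (p :: m) k l = evalWord K g (p :: nn) k l ∧
      evalWord K g (p :: m) k l ≠ 0) :
    ∃ k l : Fin n,
      evalWord K g m k l = evalWord K g nn k l ∧ evalWord K g m k l ≠ 0 := by
  obtain ⟨k, l, heq, hne⟩ := hexists
  have hm : evalWord K g (p :: m) = genMat g p.1 p.2 * evalWord K g m := by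
    simp [evalWord]
  have hn : evalWord K g (p :: nn) = genMat g p.1 p.2 * evalWord K g nn := by
    simp [evalWord]
  rw [hm, hn] at heq
  rw [hm] at hne
  simp only [Matrix.mul_apply] at heq hne
  by_cases hj : ∃ j : Fin n, g k * p.1 = g j
  · obtain ⟨j, hjj⟩ := hj
    have key : ∀ (M : Matrix (Fin n) (Fin n) (MvPolynomial (G × ℕ × Fin n) K)),
        ∑ j', genMat g p.1 p.2 k j' * M j' l
          = MvPolynomial.X (p.1, p.2, k) * M j l := by
      intro M
      rw [Finset.sum_eq_single j]
      · simp [genMat, hjj]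
      · intro j' _ hj'
        have : g k * p.1 ≠ g j' := fun h => hj' (hg (hjj ▸ h).symm)
        simp [genMat, this]
      · simp
    rw [key, key] at heq
    rw [key] at hne
    refine ⟨j, l, ?_, ?_⟩
    · exact mul_left_cancel₀ (MvPolynomial.X_ne_zero _) heq
    · exact right_ne_zero_of_mul hne
  · exfalso
    apply hne
    apply Finset.sum_eq_zero
    intro j' _
    have : g k * p.1 ≠ g j' := fun h => hj ⟨j', h⟩
    simp [genMat, this]
end

section
/- Let K be an infinite field, G a finite group of order n, and let (g_1,...,g_n) in G^n with pairwise distinct entries (i.e., an enumeration of G) induce an elementary G-grading of M_n(K). Then no nonzero graded monomial x_{i_1}...x_{i_k} (k >= 1) is a graded polynomial identity of M_n(K). -/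
/-- if `G` has order `n` and `(g₁, …, gₙ)` enumerates `G`, then no nonzero
graded monomial (encoded by a nonempty word `w` of pairs `(degree, variable index)`) is a
graded identity of `Mₙ(K)`: some graded substitution gives a nonzero product. -/
theorem no_monomial_identity
    (K : Type*) [Field K] [Infinite K] {G : Type*} [Group G] [Fintype G] {n : ℕ}
    (hcard : Fintype.card G = n) (g : Fin n → G) (hg : Function.Bijective g)
    (w : List (G × ℕ)) (hw : w ≠ []) :
    ∃ v : G × ℕ → Matrix (Fin n) (Fin n) K,
      (∀ p : G × ℕ, v p ∈ elemComp K g p.1) ∧ (w.map v).prod ≠ 0 := by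
  have hn : 0 < n := hcard ▸ Fintype.card_pos
  haveI : NeZero n := ⟨hn.ne'⟩
  set ge : Fin n ≃ G := Equiv.ofBijective g hg with hge
  set σ : G → Equiv.Perm (Fin n) := fun h => ge.trans ((Equiv.mulRight h).trans ge.symm)
    with hσ
  have hgσ : ∀ (h : G) (i : Fin n), g (σ h i) = g i * h := by
    intro h i
    exact ge.apply_symm_apply (g i * h)
  refine ⟨fun p => (σ p.1).permMatrix K, ?_, ?_⟩
  · intro p
    dsimp only
    have heq : (σ p.1).permMatrix K = ∑ i, Matrix.single i (σ p.1 i) (1 : K) := by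
      ext a b
      simp only [Equiv.Perm.permMatrix, PEquiv.toMatrix_apply, Equiv.toPEquiv_apply,
        Option.mem_def, Option.some.injEq, Matrix.sum_apply]
      rw [Finset.sum_eq_single a]
      · by_cases hb : b = σ p.1 a <;> simp [Matrix.single, hb, eq_comm]
      · intro c _ hc
        simp only [Matrix.single, Matrix.of_apply, ite_eq_right_iff]
        exact fun h' => absurd h'.1 hc
      · simp
    rw [heq]
    refine Submodule.sum_mem _ fun i _ => Submodule.subset_span ⟨i, σ p.1 i, ?_, rfl⟩
    rw [hgσ p.1 i, inv_mul_cancel_left]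
  · have hunit : IsUnit ((w.map (fun p => (σ p.1).permMatrix K)).prod) := by
      refine List.prod_isUnit ?_
      intro m hm
      simp only [List.mem_map] at hm
      obtain ⟨p, _, rfl⟩ := hm
      rw [Matrix.isUnit_iff_isUnit_det, Matrix.det_permutation]
      exact (Equiv.Perm.sign (σ p.1)).isUnit.map (Int.castRingHom K)
    exact hunit.ne_zero
end

section
/- Let K be an infinite field, G a finite group of order n, and let (g_1,...,g_n) enumerate G, inducing an elementary G-grading of M_n(K). Then the T_G-ideal of graded identities of M_n(K) is generated by x_1 x_2 - x_2 x_1 (deg x_1 = deg x_2 = e) and x_1 x_3 x_2 - x_2 x_3 x_1 (e != deg x_1 = deg x_2 = (deg x_3)^{-1}). -/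
/-- The free `G`-graded associative algebra `K⟨X⟩` on variables `x_{h,i}` (the variable
`x_{h,i}` has degree `h`), realized as the monoid algebra of the free monoid on `G × ℕ`. -/
abbrev FreeGr (K : Type*) (G : Type*) [Field K] := MonoidAlgebra K (FreeMonoid (G × ℕ))

/-- Homogeneous component of degree `h` of `K⟨X⟩`. -/
noncomputable def homComp (K : Type*) [Field K] {G : Type*} [Group G] (h : G) :
    Submodule K (FreeGr K G) :=
  Submodule.span K {x | ∃ w : FreeMonoid (G × ℕ),
    FreeMonoid.lift (fun p : G × ℕ => p.1) w = h ∧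
    x = MonoidAlgebra.of K (FreeMonoid (G × ℕ)) w}

/-- The two-sided ideal of `K⟨X⟩` generated by a set `S`. -/
noncomputable def idealSpan {K : Type*} [Field K] {G : Type*} [Group G] (S : Set (FreeGr K G)) :
    Submodule K (FreeGr K G) :=
  Submodule.span K {x | ∃ u s v : FreeGr K G, s ∈ S ∧ x = u * s * v}

/-- Graded substitution instances of `x₁x₂ - x₂x₁`, `deg x₁ = deg x₂ = ε`. -/
def genSet1 (K : Type*) [Field K] (G : Type*) [Group G] : Set (FreeGr K G) :=
  {x | ∃ a b : FreeGr K G, a ∈ homComp K (1 : G) ∧ b ∈ homComp K (1 : G) ∧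
    x = a * b - b * a}

/-- Graded substitution instances of `x₁x₃x₂ - x₂x₃x₁`, `ε ≠ deg x₁ = deg x₂ = (deg x₃)⁻¹`. -/
def genSet2 (K : Type*) [Field K] (G : Type*) [Group G] : Set (FreeGr K G) :=
  {x | ∃ (h : G) (a b c : FreeGr K G), h ≠ 1 ∧ a ∈ homComp K h ∧ b ∈ homComp K h ∧
    c ∈ homComp K h⁻¹ ∧ x = a * c * b - b * c * a}

/-- The set of graded polynomial identities of `Mₙ(K)` with the elementary grading induced
by `g`. -/
def TGIdeal (K : Type*) [Field K] {G : Type*} [Group G] {n : ℕ} (g : Fin n → G) :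
    Set (FreeGr K G) :=
  {f | ∀ v : G × ℕ → Matrix (Fin n) (Fin n) K, (∀ p : G × ℕ, v p ∈ elemComp K g p.1) →
    (MonoidAlgebra.lift K (Matrix (Fin n) (Fin n) K) (FreeMonoid (G × ℕ))
      (FreeMonoid.lift v)) f = 0}

/-! ### Auxiliary development -/

section Aux

variable {K : Type*} [Field K] {G : Type*} [Group G]

/-- degree of a word, as a list. -/
def degL (l : List (G × ℕ)) : G := (l.map Prod.fst).prod

@[simp] lemma degL_nil : degL ([] : List (G × ℕ)) = 1 := rfl
@[simp] lemma degL_cons (p : G × ℕ) (l : List (G × ℕ)) : degL (p :: l) = p.1 * degL l := by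
  simp [degL]
@[simp] lemma degL_append (l₁ l₂ : List (G × ℕ)) : degL (l₁ ++ l₂) = degL l₁ * degL l₂ := by
  simp [degL]

/-- word as element of the free algebra. -/
noncomputable def ofW (K : Type*) [Field K] {G : Type*} [Group G] (l : List (G × ℕ)) : FreeGr K G :=
  MonoidAlgebra.of K (FreeMonoid (G × ℕ)) (FreeMonoid.ofList l)

@[simp] lemma ofW_nil : ofW K ([] : List (G × ℕ)) = 1 := rfl

lemma ofW_append (l₁ l₂ : List (G × ℕ)) : ofW K (l₁ ++ l₂) = ofW K l₁ * ofW K l₂ := by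
  simp [ofW, FreeMonoid.ofList_append]

lemma ofW_mem_homComp (l : List (G × ℕ)) : ofW K l ∈ homComp K (degL l) := by
  apply Submodule.subset_span
  refine ⟨FreeMonoid.ofList l, ?_, rfl⟩
  rw [FreeMonoid.lift_apply]
  rfl

variable {n : ℕ} (g : Fin n → G) (hg : Function.Bijective g)

/-- the permutation of rows induced by right multiplication by `h`. -/
noncomputable def sft (h : G) (i : Fin n) : Fin n := (Equiv.ofBijective g hg).symm (g i * h)

lemma g_sft (h : G) (i : Fin n) : g (sft g hg h i) = g i * h := by
  exact (Equiv.ofBijective g hg).apply_symm_apply (g i * h)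

/-- ending row of the walk reading `l` from row `i`. -/
noncomputable def colL : Fin n → List (G × ℕ) → Fin n
  | i, [] => i
  | i, p :: l => colL (sft g hg p.1 i) l

@[simp] lemma colL_nil (i : Fin n) : colL g hg i [] = i := rfl
@[simp] lemma colL_cons (i : Fin n) (p : G × ℕ) (l : List (G × ℕ)) :
    colL g hg i (p :: l) = colL g hg (sft g hg p.1 i) l := rfl

lemma colL_append (i : Fin n) (l₁ l₂ : List (G × ℕ)) :
    colL g hg i (l₁ ++ l₂) = colL g hg (colL g hg i l₁) l₂ := by
  induction l₁ generalizing i with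
  | nil => rfl
  | cons p l ih => simp [ih]

lemma g_colL (i : Fin n) (l : List (G × ℕ)) : g (colL g hg i l) = g i * degL l := by
  induction l generalizing i with
  | nil => simp
  | cons p l ih => simp [ih, g_sft, mul_assoc]

lemma colL_eq_iff_deg (i : Fin n) (l l' : List (G × ℕ)) :
    colL g hg i l = colL g hg i l' ↔ degL l = degL l' := by
  constructor
  · intro h
    have := congrArg g h
    rw [g_colL g hg, g_colL g hg] at this
    exact mul_left_cancel this
  · intro h
    apply hg.injective
    rw [g_colL g hg, g_colL g hg, h]

/-- multiset of (letter, row) pairs along the walk. -/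
noncomputable def muL : Fin n → List (G × ℕ) → Multiset ((G × ℕ) × Fin n)
  | _, [] => 0
  | i, p :: l => (p, i) ::ₘ muL (sft g hg p.1 i) l

@[simp] lemma muL_nil (i : Fin n) : muL g hg i [] = 0 := rfl
@[simp] lemma muL_cons (i : Fin n) (p : G × ℕ) (l : List (G × ℕ)) :
    muL g hg i (p :: l) = (p, i) ::ₘ muL g hg (sft g hg p.1 i) l := rfl

lemma muL_append (i : Fin n) (l₁ l₂ : List (G × ℕ)) :
    muL g hg i (l₁ ++ l₂) = muL g hg i l₁ + muL g hg (colL g hg i l₁) l₂ := by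
  induction l₁ generalizing i with
  | nil => simp
  | cons p l ih => simp [ih]

@[simp] lemma muL_card (i : Fin n) (l : List (G × ℕ)) :
    Multiset.card (muL g hg i l) = l.length := by
  induction l generalizing i with
  | nil => rfl
  | cons p l ih => simp [ih]

lemma muL_mem_iff (i : Fin n) (l : List (G × ℕ)) (q : G × ℕ) (r : Fin n) :
    (q, r) ∈ muL g hg i l ↔ ∃ a b, l = a ++ q :: b ∧ colL g hg i a = r := by
  induction l generalizing i with
  | nil => simp
  | cons p l ih =>
    simp only [muL_cons, Multiset.mem_cons, Prod.mk.injEq, ih]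
    constructor
    · rintro (⟨rfl, rfl⟩ | ⟨a, b, rfl, hc⟩)
      · exact ⟨[], l, rfl, rfl⟩
      · exact ⟨p :: a, b, rfl, by simpa using hc⟩
    · rintro ⟨a, b, hab, hc⟩
      rcases a with _ | ⟨p', a⟩
      · simp at hab
        exact Or.inl ⟨hab.1.symm, by simpa [← hab.1] using hc.symm⟩
      · simp only [List.cons_append, List.cons.injEq] at hab
        rcases hab with ⟨rfl, rfl⟩
        exact Or.inr ⟨a, b, rfl, by simpa using hc⟩

end Aux
section Ideal

variable {K : Type*} [Field K] {G : Type*} [Group G]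

local notation "I" => idealSpan (genSet1 K G ∪ genSet2 K G)

lemma gen_mem_I {s : FreeGr K G} (hs : s ∈ genSet1 K G ∪ genSet2 K G) : s ∈ I := by
  apply Submodule.subset_span
  exact ⟨1, s, 1, hs, by rw [one_mul, mul_one]⟩

lemma I_mul_mem {x : FreeGr K G} (hx : x ∈ I) (u v : FreeGr K G) : u * x * v ∈ I := by
  induction hx using Submodule.span_induction with
  | mem y hy =>
    obtain ⟨u', s, v', hs, rfl⟩ := hy
    exact Submodule.subset_span ⟨u * u', s, v' * v, hs, by noncomm_ring⟩
  | zero => simpa using Submodule.zero_mem _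
  | add y z _ _ hy hz =>
    have : u * (y + z) * v = u * y * v + u * z * v := by noncomm_ring
    rw [this]; exact Submodule.add_mem _ hy hz
  | smul c y _ hy =>
    have : u * (c • y) * v = c • (u * y * v) := by
      rw [mul_smul_comm, smul_mul_assoc]
    rw [this]; exact Submodule.smul_mem _ _ hy

lemma comm1_mem_I {x y : FreeGr K G} (hx : x ∈ homComp K (1 : G)) (hy : y ∈ homComp K (1 : G)) :
    x * y - y * x ∈ I :=
  gen_mem_I (Or.inl ⟨x, y, hx, hy, rfl⟩)

/-- the unified move: `x c y ≡ y c x` for `deg x = deg y = h`, `deg c = h⁻¹`, any `h`. -/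
lemma moveM_mem_I {h : G} {x y c : FreeGr K G} (hx : x ∈ homComp K h) (hy : y ∈ homComp K h)
    (hc : c ∈ homComp K h⁻¹) : x * c * y - y * c * x ∈ I := by
  by_cases h1 : h = 1
  · subst h1
    rw [inv_one] at hc
    have e : x * c * y - y * c * x
        = 1 * (x * c - c * x) * y + c * (x * y - y * x) * 1 + 1 * (c * y - y * c) * x := by
      noncomm_ring
    rw [e]
    refine Submodule.add_mem _ (Submodule.add_mem _ ?_ ?_) ?_
    · exact I_mul_mem (comm1_mem_I hx hc) 1 y
    · exact I_mul_mem (comm1_mem_I hx hy) c 1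
    · exact I_mul_mem (comm1_mem_I hc hy) 1 x
  · exact gen_mem_I (Or.inr ⟨h, x, y, c, h1, hx, hy, hc, rfl⟩)

/-- word-level move. -/
lemma moveM_words (X C Y S : List (G × ℕ)) (hXY : degL X = degL Y)
    (hC : degL C = (degL X)⁻¹) :
    ofW K (X ++ C ++ Y ++ S) - ofW K (Y ++ C ++ X ++ S) ∈ I := by
  have e1 : ofW K (X ++ C ++ Y ++ S) = ofW K X * ofW K C * ofW K Y * ofW K S := by
    rw [ofW_append, ofW_append, ofW_append]
  have e2 : ofW K (Y ++ C ++ X ++ S) = ofW K Y * ofW K C * ofW K X * ofW K S := by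
    rw [ofW_append, ofW_append, ofW_append]
  rw [e1, e2]
  have : ofW K X * ofW K C * ofW K Y * ofW K S - ofW K Y * ofW K C * ofW K X * ofW K S
      = 1 * (ofW K X * ofW K C * ofW K Y - ofW K Y * ofW K C * ofW K X) * ofW K S := by noncomm_ring
  rw [this]
  refine I_mul_mem (moveM_mem_I (h := degL X) (ofW_mem_homComp X) ?_ ?_) 1 _
  · rw [hXY]; exact ofW_mem_homComp Y
  · rw [← hC]; exact ofW_mem_homComp C

end Ideal
section Eval

variable {K : Type*} [Field K] {G : Type*} [Group G] {n : ℕ}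
variable (g : Fin n → G) (hg : Function.Bijective g)

/-- generic graded matrix with entries from `t`. -/
noncomputable def vGen {A : Type*} [Semiring A] (t : (G × ℕ) × Fin n → A) (p : G × ℕ) :
    Matrix (Fin n) (Fin n) A :=
  Matrix.of fun i j => if j = sft g hg p.1 i then t (p, i) else 0

lemma vGen_prod_apply {A : Type*} [CommSemiring A] (t : (G × ℕ) × Fin n → A)
    (l : List (G × ℕ)) (i j : Fin n) :
    (l.map (vGen g hg t)).prod i j
      = if j = colL g hg i l then ((muL g hg i l).map t).prod else 0 := by
  induction l generalizing i with
  | nil =>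
    simp [Matrix.one_apply, eq_comm]
    split_ifs <;> simp_all
  | cons p l ih =>
    rw [List.map_cons, List.prod_cons, Matrix.mul_apply]
    have : ∀ k : Fin n, vGen g hg t p i k * (l.map (vGen g hg t)).prod k j
        = if k = sft g hg p.1 i then t (p, i) * (l.map (vGen g hg t)).prod k j else 0 := by
      intro k
      simp [vGen, ite_mul]
    rw [Finset.sum_congr rfl fun k _ => this k, Finset.sum_ite_eq' Finset.univ]
    simp [ih]

/-- evaluation algebra map on any commutative `K`-algebra. -/
noncomputable def evalW (A : Type*) [CommRing A] [Algebra K A] (t : (G × ℕ) × Fin n → A) :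
    FreeGr K G →ₐ[K] Matrix (Fin n) (Fin n) A :=
  (MonoidAlgebra.lift K (Matrix (Fin n) (Fin n) A) (FreeMonoid (G × ℕ)))
    (FreeMonoid.lift (vGen g hg t))

lemma evalW_ofW (A : Type*) [CommRing A] [Algebra K A] (t : (G × ℕ) × Fin n → A)
    (l : List (G × ℕ)) :
    evalW g hg A t (ofW K l) = (l.map (vGen g hg t)).prod := by
  rw [evalW, ofW, MonoidAlgebra.lift_of, FreeMonoid.lift_apply]
  rfl

lemma evalW_ofW_apply (A : Type*) [CommRing A] [Algebra K A] (t : (G × ℕ) × Fin n → A)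
    (l : List (G × ℕ)) (i j : Fin n) :
    evalW g hg A t (ofW K l) i j
      = if j = colL g hg i l then ((muL g hg i l).map t).prod else 0 := by
  rw [evalW_ofW, vGen_prod_apply]

/-- the generic matrix substitution lands in the elementary components. -/
lemma vGen_mem_elemComp (t : (G × ℕ) × Fin n → K) (p : G × ℕ) :
    vGen g hg t p ∈ elemComp K g p.1 := by
  have : vGen g hg t p
      = ∑ i : Fin n, t (p, i) • Matrix.single i (sft g hg p.1 i) (1 : K) := by
    ext a b
    rw [Matrix.sum_apply]
    rw [Finset.sum_eq_single a]
    · simp [vGen, Matrix.single, Matrix.smul_apply, eq_comm]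
    · intro c _ hc
      simp only [Matrix.smul_apply, Matrix.single, Matrix.of_apply, smul_eq_mul, mul_ite,
        mul_one, mul_zero]
      rw [if_neg]
      rintro ⟨rfl, -⟩
      exact hc rfl
    · simp
  rw [this]
  refine Submodule.sum_mem _ fun i _ => Submodule.smul_mem _ _ ?_
  apply Submodule.subset_span
  refine ⟨i, sft g hg p.1 i, ?_, rfl⟩
  rw [g_sft g hg]
  group

end Eval
section EasyInc

variable {K : Type*} [Field K] {G : Type*} [Group G] {n : ℕ}
variable (g : Fin n → G)

lemma one_mem_elemComp : (1 : Matrix (Fin n) (Fin n) K) ∈ elemComp K g 1 := by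
  have : (1 : Matrix (Fin n) (Fin n) K) = ∑ i : Fin n, Matrix.single i i (1 : K) := by
    ext a b
    rw [Matrix.sum_apply, Finset.sum_eq_single a]
    · simp [Matrix.one_apply, Matrix.single]
    · intro c _ hc
      simp only [Matrix.single, Matrix.of_apply]
      rw [if_neg]; rintro ⟨rfl, -⟩; exact hc rfl
    · simp
  rw [this]
  exact Submodule.sum_mem _ fun i _ => Submodule.subset_span ⟨i, i, by group, rfl⟩

lemma elemComp_mul {h₁ h₂ : G} {x y : Matrix (Fin n) (Fin n) K}
    (hx : x ∈ elemComp K g h₁) (hy : y ∈ elemComp K g h₂) : x * y ∈ elemComp K g (h₁ * h₂) := by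
  induction hx using Submodule.span_induction generalizing y with
  | mem x hx =>
    obtain ⟨i, j, hij, rfl⟩ := hx
    induction hy using Submodule.span_induction with
    | mem y hy =>
      obtain ⟨k, l, hkl, rfl⟩ := hy
      by_cases hjk : j = k
      · subst hjk
        rw [Matrix.single_mul_single_same]
        exact Submodule.subset_span ⟨i, l, by rw [← hij, ← hkl]; group, by rw [one_mul]⟩
      · rw [Matrix.single_mul_single_of_ne (h := hjk)]
        exact Submodule.zero_mem _
    | zero => rw [mul_zero]; exact Submodule.zero_mem _
    | add a b _ _ ha hb => rw [mul_add]; exact Submodule.add_mem _ ha hb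
    | smul c a _ ha => rw [mul_smul_comm]; exact Submodule.smul_mem _ _ ha
  | zero => rw [zero_mul]; exact Submodule.zero_mem _
  | add a b _ _ ha hb => rw [add_mul]; exact Submodule.add_mem _ (ha hy) (hb hy)
  | smul c a _ ha => rw [smul_mul_assoc]; exact Submodule.smul_mem _ _ (ha hy)

variable {v : G × ℕ → Matrix (Fin n) (Fin n) K}

lemma lift_homComp_mem (hv : ∀ p : G × ℕ, v p ∈ elemComp K g p.1) {h : G}
    {x : FreeGr K G} (hx : x ∈ homComp K h) :
    (MonoidAlgebra.lift K (Matrix (Fin n) (Fin n) K) (FreeMonoid (G × ℕ))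
      (FreeMonoid.lift v)) x ∈ elemComp K g h := by
  induction hx using Submodule.span_induction with
  | mem x hx =>
    obtain ⟨w, hw, rfl⟩ := hx
    rw [MonoidAlgebra.lift_of, FreeMonoid.lift_apply]
    subst hw
    rw [FreeMonoid.lift_apply]
    generalize FreeMonoid.toList w = l
    induction l with
    | nil => simpa using one_mem_elemComp g
    | cons p l ih =>
      rw [List.map_cons, List.prod_cons, List.map_cons, List.prod_cons]
      exact elemComp_mul g (hv p) ih
  | zero => rw [map_zero]; exact Submodule.zero_mem _
  | add a b _ _ ha hb => rw [map_add]; exact Submodule.add_mem _ ha hb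
  | smul c a _ ha => rw [map_smul]; exact Submodule.smul_mem _ _ ha

lemma elemComp_one_comm (hg : Function.Bijective g) {x y : Matrix (Fin n) (Fin n) K}
    (hx : x ∈ elemComp K g 1) (hy : y ∈ elemComp K g 1) : x * y = y * x := by
  induction hx using Submodule.span_induction generalizing y with
  | mem x hx =>
    obtain ⟨i, j, hij, rfl⟩ := hx
    have hij' : i = j := hg.injective (by
      have : g j = g i * 1 := by rw [← hij]; group
      simpa using this.symm)
    subst hij'
    induction hy using Submodule.span_induction with
    | mem y hy =>
      obtain ⟨k, l, hkl, rfl⟩ := hy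
      have hkl' : k = l := hg.injective (by
        have : g l = g k * 1 := by rw [← hkl]; group
        simpa using this.symm)
      subst hkl'
      by_cases hik : i = k
      · subst hik; rfl
      · rw [Matrix.single_mul_single_of_ne (h := hik),
          Matrix.single_mul_single_of_ne (h := (Ne.symm hik))]
    | zero => rw [mul_zero, zero_mul]
    | add a b _ _ ha hb => simp only [mul_add, add_mul]; rw [ha, hb]
    | smul c a _ ha => simp only [smul_mul_assoc, mul_smul_comm]; rw [ha]
  | zero => rw [zero_mul, mul_zero]
  | add a b _ _ ha hb => simp only [mul_add, add_mul]; rw [ha hy, hb hy]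
  | smul c a _ ha => simp only [smul_mul_assoc, mul_smul_comm]; rw [ha hy]

lemma triple_stdBasis_zero {i j k l i' j' : Fin n}
    (hne : ¬(j = k ∧ l = i')) :
    Matrix.single i j (1 : K) * Matrix.single k l 1
      * Matrix.single i' j' 1 = 0 := by
  by_cases e1 : j = k
  · subst e1
    rw [Matrix.single_mul_single_same]
    have e2 : l ≠ i' := fun h => hne ⟨rfl, h⟩
    rw [Matrix.single_mul_single_of_ne (h := e2)]
  · rw [Matrix.single_mul_single_of_ne (h := e1), Matrix.zero_mul]

lemma sandwich_base (hg : Function.Bijective g) {h : G} {i₁ j₁ i₂ j₂ k l : Fin n}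
    (h₁ : (g i₁)⁻¹ * g j₁ = h) (h₂ : (g i₂)⁻¹ * g j₂ = h) (h₃ : (g k)⁻¹ * g l = h⁻¹)
    (c1 : j₁ = k ∧ l = i₂) : i₁ = i₂ ∧ j₁ = j₂ := by
  obtain ⟨e1, e2⟩ := c1
  have hj₁ : g j₁ = g i₁ * h := by rw [← h₁]; group
  have hj₂ : g j₂ = g i₂ * h := by rw [← h₂]; group
  have hl : g l = g k * h⁻¹ := by rw [← h₃]; group
  have hli : g l = g i₁ := by rw [hl, ← e1, hj₁]; group
  have e3 : i₁ = i₂ := by rw [← e2]; exact (hg.injective hli).symm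
  refine ⟨e3, hg.injective ?_⟩
  rw [hj₁, hj₂, e3]

lemma elemComp_sandwich (hg : Function.Bijective g) {h : G} {a b c : Matrix (Fin n) (Fin n) K}
    (ha : a ∈ elemComp K g h) (hb : b ∈ elemComp K g h) (hc : c ∈ elemComp K g h⁻¹) :
    a * c * b = b * c * a := by
  induction ha using Submodule.span_induction generalizing b c with
  | mem a ha' =>
    induction hb using Submodule.span_induction generalizing c with
    | mem b hb' =>
      induction hc using Submodule.span_induction with
      | mem c hc' =>
        obtain ⟨i₁, j₁, h₁, rfl⟩ := ha'
        obtain ⟨i₂, j₂, h₂, rfl⟩ := hb'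
        obtain ⟨k, l, h₃, rfl⟩ := hc'
        by_cases c1 : j₁ = k ∧ l = i₂
        · obtain ⟨e3, e4⟩ := sandwich_base g hg h₁ h₂ h₃ c1
          subst e3; subst e4; rfl
        · by_cases c2 : j₂ = k ∧ l = i₁
          · obtain ⟨e3, e4⟩ := sandwich_base g hg h₂ h₁ h₃ c2
            subst e3; subst e4; rfl
          · rw [triple_stdBasis_zero c1, triple_stdBasis_zero c2]
      | zero => simp
      | add x y _ _ hx hy =>
          simp only [mul_add, add_mul]; rw [hx, hy]
      | smul r x _ hx =>
          simp only [smul_mul_assoc, mul_smul_comm]; rw [hx]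
    | zero => simp
    | add x y _ _ hx hy =>
        simp only [mul_add, add_mul]; rw [hx hc, hy hc]
    | smul r x _ hx =>
        simp only [smul_mul_assoc, mul_smul_comm]; rw [hx hc]
  | zero => simp
  | add x y _ _ hx hy =>
      simp only [mul_add, add_mul]; rw [hx hb hc, hy hb hc]
  | smul r x _ hx =>
      simp only [smul_mul_assoc, mul_smul_comm]; rw [hx hb hc]

lemma idealSpan_subset_TGIdeal (hg : Function.Bijective g) :
    (idealSpan (genSet1 K G ∪ genSet2 K G) : Set (FreeGr K G)) ⊆ TGIdeal K g := by
  intro f hf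
  intro v hv
  set φ := (MonoidAlgebra.lift K (Matrix (Fin n) (Fin n) K) (FreeMonoid (G × ℕ))
    (FreeMonoid.lift v)) with hφ
  induction hf using Submodule.span_induction with
  | mem x hx =>
    obtain ⟨u, s, v', hs, rfl⟩ := hx
    have hφs : φ s = 0 := by
      rcases hs with hs | hs
      · obtain ⟨a, b, ha, hb, rfl⟩ := hs
        rw [map_sub, map_mul, map_mul,
          elemComp_one_comm g hg (lift_homComp_mem g hv ha) (lift_homComp_mem g hv hb), sub_self]
      · obtain ⟨h, a, b, c, _, ha, hb, hc, rfl⟩ := hs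
        rw [map_sub, map_mul, map_mul, map_mul, map_mul,
          elemComp_sandwich g hg (lift_homComp_mem g hv ha) (lift_homComp_mem g hv hb)
            (lift_homComp_mem g hv hc), sub_self]
    rw [map_mul, map_mul, hφs, mul_zero, zero_mul]
  | zero => exact map_zero φ
  | add x y _ _ hx hy => rw [map_add, hx, hy, add_zero]
  | smul r x _ hx => rw [map_smul, hx, smul_zero]

end EasyInc
section Generic

variable {K : Type*} [Field K] {G : Type*} [Group G] {n : ℕ}
variable (g : Fin n → G) (hg : Function.Bijective g)

local notation "R" => MvPolynomial ((G × ℕ) × Fin n) K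

/-- the generic evaluation. -/
noncomputable def Phi : FreeGr K G →ₐ[K] Matrix (Fin n) (Fin n) R :=
  evalW g hg _ MvPolynomial.X

lemma aeval_multiset_prod (t : (G × ℕ) × Fin n → K) (m : Multiset ((G × ℕ) × Fin n)) :
    MvPolynomial.aeval t ((m.map MvPolynomial.X).prod : R) = (m.map t).prod := by
  rw [map_multiset_prod, Multiset.map_map]
  congr 1
  apply Multiset.map_congr rfl
  intro a _
  simp

lemma aeval_Phi_compat (t : (G × ℕ) × Fin n → K) (f : FreeGr K G) :
    (MvPolynomial.aeval t).mapMatrix (Phi g hg f) = evalW g hg K t f := by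
  induction f using MonoidAlgebra.induction_linear with
  | zero => simp
  | add f f' hf hf' => rw [map_add, map_add, map_add, hf, hf']
  | single a b =>
    have ha : (MonoidAlgebra.single a b : FreeGr K G) = b • ofW K (FreeMonoid.toList a) := by
      rw [ofW]
      simp [MonoidAlgebra.of_apply, MonoidAlgebra.smul_single']
    rw [ha, map_smul, map_smul, map_smul]
    congr 1
    ext i j
    rw [AlgHom.mapMatrix_apply, Matrix.map_apply, Phi, evalW_ofW_apply, evalW_ofW_apply]
    rw [apply_ite (MvPolynomial.aeval t), map_zero, aeval_multiset_prod]

lemma TGIdeal_subset_kerPhi [Infinite K] {f : FreeGr K G} (hf : f ∈ TGIdeal K g) : Phi g hg f = 0 := by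
  refine Matrix.ext fun i j => ?_
  rw [Matrix.zero_apply]
  apply MvPolynomial.funext
  intro x
  rw [map_zero]
  have h1 : MvPolynomial.eval x (Phi g hg f i j)
      = MvPolynomial.aeval x (Phi g hg f i j) := by
    rw [← MvPolynomial.coe_aeval_eq_eval]; rfl
  rw [h1]
  have h2 : MvPolynomial.aeval x (Phi g hg f i j)
      = ((MvPolynomial.aeval x).mapMatrix (Phi g hg f)) i j := rfl
  rw [h2, aeval_Phi_compat]
  have h3 : evalW g hg K x f = 0 := hf (vGen g hg x) (vGen_mem_elemComp g hg x)
  rw [h3, Matrix.zero_apply]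

lemma I_subset_kerPhi [Infinite K] {f : FreeGr K G}
    (hf : f ∈ idealSpan (genSet1 K G ∪ genSet2 K G)) : Phi g hg f = 0 :=
  TGIdeal_subset_kerPhi g hg (idealSpan_subset_TGIdeal g hg hf)

/-! ### monomials -/

lemma multiset_X_prod_eq_monomial [DecidableEq ((G × ℕ) × Fin n)]
    (m : Multiset ((G × ℕ) × Fin n)) :
    ((m.map MvPolynomial.X).prod : R) = MvPolynomial.monomial m.toFinsupp 1 := by
  induction m using Multiset.induction with
  | empty => simp
  | cons a m ih =>
    rw [Multiset.map_cons, Multiset.prod_cons, ih, ← Multiset.singleton_add, map_add,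
      Multiset.toFinsupp_singleton]
    rw [MvPolynomial.X, MvPolynomial.monomial_mul, one_mul]

lemma X_prod_inj [DecidableEq ((G × ℕ) × Fin n)]
    {m m' : Multiset ((G × ℕ) × Fin n)}
    (h : ((m.map MvPolynomial.X).prod : R) = (m'.map MvPolynomial.X).prod) : m = m' := by
  rw [multiset_X_prod_eq_monomial, multiset_X_prod_eq_monomial] at h
  have := MvPolynomial.monomial_left_injective (r := (1 : K)) one_ne_zero h
  exact Multiset.toFinsupp.injective this

lemma X_prod_ne_zero (m : Multiset ((G × ℕ) × Fin n)) :
    ((m.map MvPolynomial.X).prod : R) ≠ 0 := by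
  classical
  rw [multiset_X_prod_eq_monomial]
  simp [MvPolynomial.monomial_eq_zero]

lemma coeff_X_prod [DecidableEq ((G × ℕ) × Fin n)] (m m' : Multiset ((G × ℕ) × Fin n)) :
    MvPolynomial.coeff m'.toFinsupp ((m.map MvPolynomial.X).prod : R)
      = if m = m' then 1 else 0 := by
  rw [multiset_X_prod_eq_monomial, MvPolynomial.coeff_monomial]
  by_cases h : m = m'
  · simp [h]
  · rw [if_neg, if_neg h]
    exact fun hc => h (Multiset.toFinsupp.injective hc)

end Generic
section Main

variable {K : Type*} [Field K] {G : Type*} [Group G] {n : ℕ}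
variable (g : Fin n → G) (hg : Function.Bijective g)

lemma degL_of_colL_fixed {i : Fin n} {a : List (G × ℕ)} (h : colL g hg i a = i) :
    degL a = 1 := by
  have := g_colL g hg i a
  rw [h] at this
  have : g i * 1 = g i * degL a := by rw [mul_one]; exact this
  exact (mul_left_cancel this).symm

lemma phi_data {l l' : List (G × ℕ)}
    (h : Phi g hg (ofW K l) = Phi g hg (ofW K l')) (i : Fin n) :
    colL g hg i l = colL g hg i l' ∧ muL g hg i l = muL g hg i l' := by
  classical
  have happ : ∀ j, Phi g hg (ofW K l) i j = Phi g hg (ofW K l') i j := by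
    intro j; rw [h]
  have h1 := happ (colL g hg i l)
  rw [Phi, evalW_ofW_apply, evalW_ofW_apply, if_pos rfl] at h1
  by_cases hc : colL g hg i l = colL g hg i l'
  · rw [if_pos hc] at h1
    exact ⟨hc, X_prod_inj h1⟩
  · rw [if_neg hc] at h1
    exact absurd h1 (X_prod_ne_zero _)

/-- the key counting lemma: a matching pair of nonempty prefixes with equal ending rows
exists. -/
lemma match_exists (i : Fin n) (a b u' : List (G × ℕ)) (p' : G × ℕ)
    (ha : a ≠ []) (hca : colL g hg i a = i)
    (hμ : muL g hg i (a ++ p' :: b) = muL g hg i (p' :: u')) :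
    ∃ k m, 1 ≤ k ∧ k ≤ a.length ∧ 1 ≤ m ∧ m ≤ (p' :: b).length ∧
      colL g hg i (a.take k) = colL g hg i ((p' :: b).take m) := by
  classical
  by_contra hno
  push_neg at hno
  -- the set of rows reached by nonempty prefixes of `p' :: b`
  set B : Fin n → Prop := fun r => ∃ m, 1 ≤ m ∧ m ≤ (p' :: b).length ∧
    colL g hg i ((p' :: b).take m) = r with hB
  have halen : 1 ≤ a.length := by
    cases a with
    | nil => exact absurd rfl ha
    | cons q a => simp
  have hiB : ¬ B i := by
    rintro ⟨m, hm1, hm2, hm3⟩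
    have := hno a.length m
    rw [List.take_length] at this
    exact this halen le_rfl hm1 hm2 (by rw [hca, hm3])
  have hAB : ∀ k, 1 ≤ k → k ≤ a.length → ¬ B (colL g hg i (a.take k)) := by
    intro k hk1 hk2
    rintro ⟨m, hm1, hm2, hm3⟩
    exact hno k m hk1 hk2 hm1 hm2 (by rw [hm3])
  -- rows of elements of `muL i a` are not in `B`
  have hrowsa : ∀ e ∈ muL g hg i a, ¬ B e.2 := by
    rintro ⟨q, r⟩ hmem
    rw [muL_mem_iff] at hmem
    obtain ⟨a₁, a₂, rfl, hr⟩ := hmem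
    rcases a₁ with _ | ⟨q₁, a₁⟩
    · simpa using fun hBr => hiB (by rwa [← hr] at hBr)
    · intro hBr
      have hlen : 1 ≤ (q₁ :: a₁).length ∧ (q₁ :: a₁).length ≤ ((q₁ :: a₁) ++ q :: a₂).length := by
        constructor
        · simp
        · simp
      have htake : ((q₁ :: a₁) ++ q :: a₂).take (q₁ :: a₁).length = q₁ :: a₁ :=
        List.take_left
      have := hAB (q₁ :: a₁).length hlen.1 hlen.2
      rw [htake, hr] at this
      exact this hBr
  -- closure of `B` under the edges of the total multiset
  have hcl : ∀ q : G × ℕ, ∀ r : Fin n, (q, r) ∈ muL g hg i (a ++ p' :: b) → B r →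
      B (sft g hg q.1 r) := by
    intro q r hmem hBr
    rw [muL_append, hca, Multiset.mem_add] at hmem
    rcases hmem with hmem | hmem
    · exact absurd hBr (hrowsa _ hmem)
    · rw [muL_mem_iff] at hmem
      obtain ⟨c₁, c₂, hc, hr⟩ := hmem
      refine ⟨c₁.length + 1, by omega, ?_, ?_⟩
      · rw [hc]; simp
      · have harith : c₁.length + 1 - c₁.length = 1 := by omega
        have htake : (p' :: b).take (c₁.length + 1) = c₁ ++ [q] := by
          rw [hc, List.take_append, harith,
            List.take_of_length_le (by omega)]
          rfl
        rw [htake, colL_append, hr]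
        rfl
  -- every element of the `u'`-part has row in `B`
  have hC2 : ∀ (c : List (G × ℕ)) (j : Fin n), muL g hg j c ≤ muL g hg i (a ++ p' :: b) →
      B j → ∀ e ∈ muL g hg j c, B e.2 := by
    intro c
    induction c with
    | nil => intro j _ _ e he; simp at he
    | cons q c ih =>
      intro j hle hBj e he
      rw [muL_cons, Multiset.mem_cons] at he
      have hsub : muL g hg (sft g hg q.1 j) c ≤ muL g hg i (a ++ p' :: b) :=
        le_trans (Multiset.le_cons_self _ _) hle
      rcases he with rfl | he
      · exact hBj
      · have hqj : ((q, j) : (G × ℕ) × Fin n) ∈ muL g hg i (a ++ p' :: b) :=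
          Multiset.mem_of_le hle (Multiset.mem_cons_self _ _)
        exact ih (sft g hg q.1 j) hsub (hcl q j hqj hBj) e he
  -- counting
  set Q : (G × ℕ) × Fin n → Prop := fun e => ¬ B e.2 with hQ
  have hcard : (Multiset.filter Q (muL g hg i (a ++ p' :: b))).card
      = (Multiset.filter Q (muL g hg i (p' :: u'))).card := by rw [hμ]
  have hBs : B (sft g hg p'.1 i) :=
    ⟨1, le_rfl, by simp, rfl⟩
  have hRHS : (Multiset.filter Q (muL g hg i (p' :: u'))).card = 1 := by
    rw [muL_cons, Multiset.filter_cons_of_pos _ (by exact hiB),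
      Multiset.filter_eq_nil.mpr, Multiset.card_cons, Multiset.card_zero]
    intro e he
    have := hC2 u' (sft g hg p'.1 i) (by rw [hμ, muL_cons]; exact Multiset.le_cons_self _ _)
      hBs e he
    simpa [hQ] using this
  have hLHS : 2 ≤ (Multiset.filter Q (muL g hg i (a ++ p' :: b))).card := by
    rw [muL_append, hca, Multiset.filter_add, muL_cons,
      Multiset.filter_cons_of_pos _ (by exact hiB)]
    rw [Multiset.filter_eq_self.mpr hrowsa]
    rw [Multiset.card_add, Multiset.card_cons, muL_card]
    omega
  omega

end Main
section MainCongr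

variable {K : Type*} [Field K] [Infinite K] {G : Type*} [Group G] {n : ℕ}
variable (g : Fin n → G) (hg : Function.Bijective g)

local notation "I" => idealSpan (genSet1 K G ∪ genSet2 K G)

lemma strip_head (p' : G × ℕ) (t u' : List (G × ℕ)) (d : ofW K t - ofW K u' ∈ I) :
    ofW K (p' :: t) - ofW K (p' :: u') ∈ I := by
  have h1 : (p' :: t) = [p'] ++ t := rfl
  have h2 : (p' :: u') = [p'] ++ u' := rfl
  rw [h1, h2, ofW_append, ofW_append, ← mul_sub]
  have := I_mul_mem d (ofW K [p']) 1
  rwa [mul_one] at this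

lemma main_congr : ∀ N (l l' : List (G × ℕ)) (i : Fin n), l.length ≤ N →
    muL g hg i l = muL g hg i l' → colL g hg i l = colL g hg i l' →
    ofW K l - ofW K l' ∈ I := by
  intro N
  induction N with
  | zero =>
    intro l l' i hlen hμ _
    have hl : l = [] := List.length_eq_zero_iff.mp (Nat.le_zero.mp hlen)
    subst hl
    have : Multiset.card (muL g hg i l') = 0 := by rw [← hμ]; simp
    rw [muL_card] at this
    have hl' : l' = [] := List.length_eq_zero_iff.mp this
    subst hl'
    simp
  | succ N ih =>
    intro l l' i hlen hμ hcol
    cases l' with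
    | nil =>
      have : Multiset.card (muL g hg i l) = 0 := by rw [hμ]; simp
      rw [muL_card] at this
      have hl : l = [] := List.length_eq_zero_iff.mp this
      subst hl; simp
    | cons p' u' =>
      have hmem : ((p', i) : (G × ℕ) × Fin n) ∈ muL g hg i l := by
        rw [hμ, muL_cons]; exact Multiset.mem_cons_self _ _
      rw [muL_mem_iff] at hmem
      obtain ⟨a, b, rfl, hcai⟩ := hmem
      by_cases hanil : a = []
      · subst hanil
        simp only [List.nil_append] at hμ hcol hlen ⊢
        rw [muL_cons, muL_cons] at hμ
        have hμt := (Multiset.cons_inj_right _).mp hμ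
        rw [colL_cons, colL_cons] at hcol
        have hlent : b.length ≤ N := by simp at hlen; omega
        exact strip_head p' b u' (ih b u' (sft g hg p'.1 i) hlent hμt hcol)
      · obtain ⟨k, m, hk1, hk2, hm1, hm2, hkm⟩ := match_exists g hg i a b u' p' hanil hcai hμ
        set X := a.take k with hX
        set C := a.drop k with hC
        set Y := (p' :: b).take m with hY
        set S := (p' :: b).drop m with hS
        have hXC : X ++ C = a := List.take_append_drop _ _
        have hYS : Y ++ S = p' :: b := List.take_append_drop _ _
        have hdXY : degL X = degL Y := (colL_eq_iff_deg g hg i X Y).mp hkm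
        have hdega : degL a = 1 := degL_of_colL_fixed g hg hcai
        have hdC : degL C = (degL X)⁻¹ := by
          have : degL X * degL C = 1 := by rw [← degL_append, hXC, hdega]
          exact ((inv_eq_of_mul_eq_one_right this).symm)
        have hmove := moveM_words (K := K) X C Y S hdXY hdC
        have hl : a ++ p' :: b = X ++ C ++ Y ++ S := by
          rw [← hXC, ← hYS]; simp [List.append_assoc]
        set w₂ := Y ++ C ++ X ++ S with hw₂def
        have h2 : ofW K (a ++ p' :: b) - ofW K w₂ ∈ I := by rw [hl]; exact hmove
        have hphi : Phi g hg (ofW K (a ++ p' :: b)) = Phi g hg (ofW K w₂) := by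
          have h0 := I_subset_kerPhi g hg h2
          rw [map_sub] at h0
          exact sub_eq_zero.mp h0
        obtain ⟨hcol2, hμ2⟩ := phi_data g hg hphi i
        -- `w₂` starts with `p'`
        obtain ⟨m₀, rfl⟩ : ∃ m₀, m = m₀ + 1 := ⟨m - 1, by omega⟩
        have hYcons : Y = p' :: b.take m₀ := by rw [hY, List.take_succ_cons]
        set t := (b.take m₀ ++ C ++ X ++ S) with ht
        have hw₂ : w₂ = p' :: t := by
          rw [hw₂def, hYcons, ht]; simp [List.cons_append, List.append_assoc]
        -- strip the head and use the inductive hypothesis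
        rw [hw₂] at hμ2 hcol2
        have hμ3 : muL g hg i (p' :: t) = muL g hg i (p' :: u') := by rw [← hμ2, hμ]
        have hcol3 : colL g hg i (p' :: t) = colL g hg i (p' :: u') := by rw [← hcol2, hcol]
        rw [muL_cons, muL_cons] at hμ3
        have hμt := (Multiset.cons_inj_right _).mp hμ3
        rw [colL_cons, colL_cons] at hcol3
        have hlent : t.length ≤ N := by
          have h4 := congrArg Multiset.card hμ2
          rw [muL_card, muL_card] at h4
          simp only [List.length_append, List.length_cons] at h4 hlen
          omega
        have hIt := ih t u' (sft g hg p'.1 i) hlent hμt hcol3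
        have h3 : ofW K w₂ - ofW K (p' :: u') ∈ I := by
          rw [hw₂]; exact strip_head p' t u' hIt
        have := Submodule.add_mem _ h2 h3
        rwa [sub_add_sub_cancel] at this

end MainCongr
section Assemble

variable {K : Type*} [Field K] [Infinite K] {G : Type*} [Group G] {n : ℕ}
variable (g : Fin n → G) (hg : Function.Bijective g)

local notation "I" => idealSpan (genSet1 K G ∪ genSet2 K G)

lemma single_eq_smul_ofW (w : FreeMonoid (G × ℕ)) (c : K) :
    (MonoidAlgebra.single w c : FreeGr K G) = c • ofW K (FreeMonoid.toList w) := by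
  rw [ofW]
  simp [MonoidAlgebra.of_apply, MonoidAlgebra.smul_single']

lemma assemble (hg : Function.Bijective g) : ∀ N (f : FreeGr K G), f ∈ TGIdeal K g → f.coeff.support.card ≤ N → f ∈ I := by
  classical
  intro N
  induction N with
  | zero =>
    intro f _ hcard
    have : f.coeff.support = ∅ := Finset.card_eq_zero.mp (Nat.le_zero.mp hcard)
    have hf0 : f = 0 := MonoidAlgebra.coeff_eq_zero.mp (Finsupp.support_eq_empty.mp this)
    rw [hf0]; exact Submodule.zero_mem _
  | succ N ih =>
    intro f hf hcard
    by_cases hemp : f.coeff.support = ∅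
    · have hf0 : f = 0 := MonoidAlgebra.coeff_eq_zero.mp (Finsupp.support_eq_empty.mp hemp)
      rw [hf0]; exact Submodule.zero_mem _
    · obtain ⟨w₀, hw₀⟩ := Finset.nonempty_of_ne_empty hemp
      obtain ⟨i₀, -⟩ := hg.surjective 1
      set j₀ := colL g hg i₀ (FreeMonoid.toList w₀) with hj₀
      set μ₀ := muL g hg i₀ (FreeMonoid.toList w₀) with hμ₀
      set cls : FreeMonoid (G × ℕ) → Prop := fun w =>
        muL g hg i₀ (FreeMonoid.toList w) = μ₀ ∧
        colL g hg i₀ (FreeMonoid.toList w) = j₀ with hcls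
      set S := f.coeff.support.filter cls with hSdef
      have hw₀S : w₀ ∈ S := by
        rw [hSdef, Finset.mem_filter]
        exact ⟨hw₀, rfl, rfl⟩
      -- the class sum vanishes
      have hphi0 : Phi g hg f = 0 := TGIdeal_subset_kerPhi g hg hf
      have hsum : ∑ w ∈ S, f.coeff w = 0 := by
        have h0 : Phi g hg f i₀ j₀ = 0 := by rw [hphi0]; rfl
        have hfs : f = ∑ w ∈ f.coeff.support, MonoidAlgebra.single w (f.coeff w) := by
          conv_lhs => rw [← MonoidAlgebra.sum_coeff_single f]
          rfl
        rw [hfs] at h0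
        rw [map_sum] at h0
        rw [Matrix.sum_apply] at h0
        have hterm : ∀ w ∈ f.coeff.support,
            MvPolynomial.coeff μ₀.toFinsupp
              ((Phi g hg (MonoidAlgebra.single w (f.coeff w))) i₀ j₀)
            = if cls w then f.coeff w else 0 := by
          intro w _
          rw [single_eq_smul_ofW, map_smul, Matrix.smul_apply, Phi, evalW_ofW_apply]
          rw [MvPolynomial.smul_eq_C_mul, MvPolynomial.coeff_C_mul]
          by_cases h1 : j₀ = colL g hg i₀ (FreeMonoid.toList w)
          · rw [if_pos h1, coeff_X_prod]
            by_cases h2 : muL g hg i₀ (FreeMonoid.toList w) = μ₀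
            · rw [if_pos h2, if_pos ⟨h2, h1.symm⟩, mul_one]
            · rw [if_neg h2, if_neg, mul_zero]
              rintro ⟨h3, -⟩; exact h2 h3
          · rw [if_neg h1, MvPolynomial.coeff_zero, mul_zero, if_neg]
            rintro ⟨-, h3⟩; exact h1 h3.symm
        have h1 := congrArg (MvPolynomial.coeff μ₀.toFinsupp) h0
        rw [MvPolynomial.coeff_zero, MvPolynomial.coeff_sum] at h1
        rw [Finset.sum_congr rfl hterm] at h1
        rw [hSdef, Finset.sum_filter]
        exact h1
      -- the class part is in the ideal
      set f₁ : FreeGr K G := ∑ w ∈ S, f.coeff w •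
        (ofW K (FreeMonoid.toList w) - ofW K (FreeMonoid.toList w₀)) with hf₁def
      have hf₁ : f₁ ∈ I := by
        refine Submodule.sum_mem _ fun w hw => Submodule.smul_mem _ _ ?_
        rw [hSdef, Finset.mem_filter, hcls] at hw
        exact main_congr g hg (FreeMonoid.toList w).length _ _ i₀ le_rfl
          (by rw [hw.2.1, hμ₀]) (by rw [hw.2.2, hj₀])
      -- split f
      set f₂ : FreeGr K G := ∑ w ∈ f.coeff.support.filter (fun w => ¬ cls w),
        MonoidAlgebra.single w (f.coeff w) with hf₂def
      have hsplit : f = f₁ + f₂ := by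
        have hfs : f = ∑ w ∈ f.coeff.support, MonoidAlgebra.single w (f.coeff w) := by
          conv_lhs => rw [← MonoidAlgebra.sum_coeff_single f]
          rfl
        rw [hfs, ← Finset.sum_filter_add_sum_filter_not f.coeff.support cls, ← hSdef, ← hf₂def]
        congr 1
        have : ∀ w ∈ S, (MonoidAlgebra.single w (f.coeff w) : FreeGr K G)
            = f.coeff w • (ofW K (FreeMonoid.toList w) - ofW K (FreeMonoid.toList w₀))
              + f.coeff w • ofW K (FreeMonoid.toList w₀) := by
          intro w _
          rw [smul_sub, sub_add_cancel, single_eq_smul_ofW]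
        rw [Finset.sum_congr rfl this, Finset.sum_add_distrib, ← Finset.sum_smul, hsum,
          zero_smul, add_zero, hf₁def]
      -- f₂ is again an identity with smaller support
      have hf₂T : f₂ ∈ TGIdeal K g := by
        intro v hv
        have e2 : f₂ = f - f₁ := by rw [hsplit, add_sub_cancel_left]
        rw [e2, map_sub, hf v hv, idealSpan_subset_TGIdeal g hg hf₁ v hv, sub_zero]
      have hsupp₂ : f₂.coeff.support ⊆ f.coeff.support.filter (fun w => ¬ cls w) := by
        rw [hf₂def]
        rw [MonoidAlgebra.coeff_sum]
        refine le_trans Finsupp.support_finset_sum ?_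
        intro x hx
        rw [Finset.mem_biUnion] at hx
        obtain ⟨w, hw, hxw⟩ := hx
        rw [MonoidAlgebra.coeff_single] at hxw
        have := Finsupp.support_single_subset hxw
        rw [Finset.mem_singleton] at this
        rwa [this]
      have hcard₂ : f₂.coeff.support.card ≤ N := by
        have h5 : (f.coeff.support.filter (fun w => ¬ cls w)).card < f.coeff.support.card := by
          apply Finset.card_lt_card
          exact Finset.filter_ssubset.mpr ⟨w₀, hw₀, not_not_intro (Finset.mem_filter.mp hw₀S).2⟩
        have := Finset.card_le_card hsupp₂
        omega
      have hf₂I : f₂ ∈ I := ih f₂ hf₂T hcard₂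
      rw [hsplit]
      exact Submodule.add_mem _ hf₁ hf₂I

end Assemble

/-- if `K` is infinite, `G` is a group of order `n`, and `(g₁, …, gₙ)`
enumerates `G`, then the graded identities of `Mₙ(K)` are generated, as a `T_G`-ideal, by
the identities (1) and (2). -/
theorem graded_identities_basis_card_eq
    (K : Type*) [Field K] [Infinite K] {G : Type*} [Group G] [Fintype G] {n : ℕ}
    (hcard : Fintype.card G = n) (g : Fin n → G) (hg : Function.Bijective g) :
    TGIdeal K g = ↑(idealSpan (genSet1 K G ∪ genSet2 K G)) := by
  apply Set.Subset.antisymm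
  · intro f hf
    exact assemble g hg f.coeff.support.card f hf le_rfl
  · exact idealSpan_subset_TGIdeal g hg
end

section
/- For a G-grading of M_n(K) all of whose matrix units E_{ij} are homogeneous, the grading is elementary: there exists an n-tuple (g_1,...,g_n) in G^n such that each E_{ij} is homogeneous of degree g_i^{-1} g_j. -/
/-- for a `G`-grading `𝒜` of `Mₙ(K)` (a direct sum decomposition into
subspaces with `𝒜 a * 𝒜 b ⊆ 𝒜 (a * b)`) in which every matrix unit is homogeneous, the
grading is elementary: there is a tuple `(g₁, …, gₙ)` such that `E i j` is homogeneous of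
degree `(g i)⁻¹ * g j`. -/
theorem grading_elementary_of_matrix_units_homogeneous
    (K : Type*) [Field K] {G : Type*} [Group G] [DecidableEq G] {n : ℕ}
    (𝒜 : G → Submodule K (Matrix (Fin n) (Fin n) K))
    (hdecomp : DirectSum.IsInternal 𝒜)
    (hmul : ∀ a b : G, ∀ x ∈ 𝒜 a, ∀ y ∈ 𝒜 b, x * y ∈ 𝒜 (a * b))
    (hunits : ∀ i j : Fin n, ∃ h : G, Matrix.single i j (1 : K) ∈ 𝒜 h) :
    ∃ g : Fin n → G, ∀ i j : Fin n,
      Matrix.single i j (1 : K) ∈ 𝒜 ((g i)⁻¹ * g j) := by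
  choose h hh using hunits
  have hne : ∀ i j : Fin n, Matrix.single i j (1 : K) ≠ 0 := by
    intro i j hzero
    have := congrFun (congrFun hzero i) j
    simp [Matrix.single_apply_same] at this
  have uniq : ∀ (a b : G) (x : Matrix (Fin n) (Fin n) K),
      x ≠ 0 → x ∈ 𝒜 a → x ∈ 𝒜 b → a = b := by
    intro a b x hx ha hb
    by_contra hab
    have hdisj : Disjoint (𝒜 a) (𝒜 b) :=
      hdecomp.submodule_iSupIndep.pairwiseDisjoint hab
    exact hx (Submodule.disjoint_def.mp hdisj x ha hb)
  rcases Nat.eq_zero_or_pos n with hn | hn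
  · subst hn
    exact ⟨fun _ => 1, fun i => i.elim0⟩
  · have z : Fin n := ⟨0, hn⟩
    refine ⟨fun i => h z i, fun i j => ?_⟩
    have hprod : Matrix.single z i (1 : K) * Matrix.single i j (1 : K)
        = Matrix.single z j (1 : K) := by
      rw [Matrix.single_mul_single_same, one_mul]
    have hmem : Matrix.single z j (1 : K) ∈ 𝒜 (h z i * h i j) := by
      rw [← hprod]
      exact hmul _ _ _ (hh z i) _ (hh i j)
    have heq : h z i * h i j = h z j := uniq _ _ _ (hne z j) hmem (hh z j)
    have : (h z i)⁻¹ * h z j = h i j := by rw [← heq]; group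
    rw [this]
    exact hh i j
end

section
/- Let K be an infinite field and let M_n(K) carry the elementary G-grading induced by pairwise distinct (g_1,...,g_n). The relatively free algebra K<X>/T_G(M_n(K)) is isomorphic, as a G-graded algebra, to the subalgebra F of M_n(K[Y]) generated by the generic matrices A_i^{(h)} (h in G, i in N), via the map sending the class of the variable x (the i-th variable of degree h) to A_i^{(h)}. In particular T_G(F) = T_G(M_n(K)). -/
section Aux

variable (K : Type*) [Field K] {G : Type*} [Group G] [DecidableEq G] {n : ℕ} (g : Fin n → G)

/-- Composing the substitution hom with an algebra hom gives the substitution by the images. -/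
theorem lift_comp_aux {S T : Type*} [Semiring S] [Semiring T] [Algebra K S] [Algebra K T]
    (ψ : S →ₐ[K] T) (u : G × ℕ → S) :
    ψ.comp (MonoidAlgebra.lift K S (FreeMonoid (G × ℕ)) (FreeMonoid.lift u)) =
      MonoidAlgebra.lift K T (FreeMonoid (G × ℕ)) (FreeMonoid.lift fun p => ψ (u p)) := by
  refine MonoidAlgebra.algHom_ext ?_ (Subsingleton.elim _ _)
  intro x
  have hmon : (ψ : S →* T).comp (FreeMonoid.lift u) = FreeMonoid.lift fun p => ψ (u p) :=
    FreeMonoid.hom_eq (fun p => by simp)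
  simp only [AlgHom.coe_comp, Function.comp_apply, MonoidAlgebra.lift_of,
    MonoidAlgebra.lift_single, one_smul]
  exact DFunLike.congr_fun hmon x

theorem mem_elemComp_of_support {h : G} (M : Matrix (Fin n) (Fin n) K)
    (hM : ∀ k l, g k * h ≠ g l → M k l = 0) : M ∈ elemComp K g h := by
  rw [Matrix.matrix_eq_sum_single M]
  refine Submodule.sum_mem _ fun k _ => Submodule.sum_mem _ fun l _ => ?_
  by_cases hc : g k * h = g l
  · have : Matrix.single k l (M k l) = M k l • Matrix.single k l 1 := by
      ext a b
      simp [Matrix.single, Matrix.smul_apply, mul_ite]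
    rw [this]
    refine Submodule.smul_mem _ _ (Submodule.subset_span ⟨k, l, ?_, rfl⟩)
    rw [inv_mul_eq_iff_eq_mul]; exact hc.symm
  · rw [hM k l hc]
    simpa using Submodule.zero_mem (elemComp K g h)

theorem support_of_mem_elemComp {h : G} {M : Matrix (Fin n) (Fin n) K}
    (hM : M ∈ elemComp K g h) : ∀ k l, g k * h ≠ g l → M k l = 0 := by
  induction hM using Submodule.span_induction with
  | mem x hx =>
    obtain ⟨i, j, hij, rfl⟩ := hx
    intro k l hkl
    have : ¬(i = k ∧ j = l) := by
      rintro ⟨rfl, rfl⟩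
      exact hkl (by rw [← hij]; group)
    simp [Matrix.single, this]
  | zero => simp
  | add x y hx hy ihx ihy => intro k l hkl; simp [ihx k l hkl, ihy k l hkl]
  | smul a x hx ihx => intro k l hkl; simp [ihx k l hkl]

/-- The free graded algebra is generated by the variables. -/
theorem adjoin_vars_eq_top :
    Algebra.adjoin K (Set.range fun p : G × ℕ =>
      MonoidAlgebra.of K (FreeMonoid (G × ℕ)) (FreeMonoid.of p)) = ⊤ := by
  rw [eq_top_iff]
  intro f hf
  clear hf
  induction f using MonoidAlgebra.induction_on with
  | of m =>
    induction m using FreeMonoid.recOn with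
    | one => rw [map_one]; exact Subalgebra.one_mem _
    | of_mul x xs ih =>
      rw [map_mul]
      exact Subalgebra.mul_mem _ (Algebra.subset_adjoin ⟨x, rfl⟩) ih
  | add f g hf hg => exact Subalgebra.add_mem _ hf hg
  | smul r f hf => exact Subalgebra.smul_mem _ hf r

/-- Any homogeneous substitution is a specialization of the generic matrices. -/
theorem aeval_genMat {Ω : Type*} [CommSemiring Ω] [Algebra K Ω] (hg : Function.Injective g)
    (v : G × ℕ → Matrix (Fin n) (Fin n) Ω)
    (hsupp : ∀ p : G × ℕ, ∀ k l, g k * p.1 ≠ g l → v p k l = 0) (p : G × ℕ) :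
    (MvPolynomial.aeval fun q : G × ℕ × Fin n =>
        ∑ l, if g q.2.2 * q.1 = g l then v (q.1, q.2.1) q.2.2 l else 0 :
      MvPolynomial (G × ℕ × Fin n) K →ₐ[K] Ω).mapMatrix (genMat (K := K) g p.1 p.2) = v p := by
  ext k l
  simp only [AlgHom.mapMatrix_apply, Matrix.map_apply, genMat, Matrix.of_apply,
    apply_ite (MvPolynomial.aeval _), MvPolynomial.aeval_X, map_zero]
  by_cases hc : g k * p.1 = g l
  · rw [if_pos hc]
    rw [Finset.sum_eq_single l]
    · rw [if_pos hc]
    · intro b _ hb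
      rw [if_neg]
      intro hcb
      exact hb (hg (hcb.symm.trans hc))
    · intro hl; exact absurd (Finset.mem_univ l) hl
  · rw [if_neg hc, (hsupp p k l hc)]


/-- Substitution by homogeneous matrices factors through the generic substitution. -/
theorem key_aux (hg : Function.Injective g) {Ω : Type*} [CommRing Ω] [Algebra K Ω]
    (v : G × ℕ → Matrix (Fin n) (Fin n) Ω)
    (hsupp : ∀ p : G × ℕ, ∀ k l, g k * p.1 ≠ g l → v p k l = 0) (f : FreeGr K G) :
    (MonoidAlgebra.lift K (Matrix (Fin n) (Fin n) Ω) (FreeMonoid (G × ℕ))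
        (FreeMonoid.lift v)) f
      = ((MvPolynomial.aeval fun q : G × ℕ × Fin n =>
            ∑ l, if g q.2.2 * q.1 = g l then v (q.1, q.2.1) q.2.2 l else 0 :
          MvPolynomial (G × ℕ × Fin n) K →ₐ[K] Ω).mapMatrix)
        ((MonoidAlgebra.lift K
            (Matrix (Fin n) (Fin n) (MvPolynomial (G × ℕ × Fin n) K)) (FreeMonoid (G × ℕ))
          (FreeMonoid.lift fun p : G × ℕ => genMat (K := K) g p.1 p.2)) f) := by
  have h1 := lift_comp_aux K
    ((MvPolynomial.aeval fun q : G × ℕ × Fin n =>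
        ∑ l, if g q.2.2 * q.1 = g l then v (q.1, q.2.1) q.2.2 l else 0 :
      MvPolynomial (G × ℕ × Fin n) K →ₐ[K] Ω).mapMatrix)
    (fun p : G × ℕ => genMat (K := K) g p.1 p.2)
  have h2 : (fun p : G × ℕ =>
      ((MvPolynomial.aeval fun q : G × ℕ × Fin n =>
          ∑ l, if g q.2.2 * q.1 = g l then v (q.1, q.2.1) q.2.2 l else 0 :
        MvPolynomial (G × ℕ × Fin n) K →ₐ[K] Ω).mapMatrix)
        (genMat (K := K) g p.1 p.2)) = v := funext fun p => aeval_genMat K g hg v hsupp p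
  rw [h2] at h1
  exact (DFunLike.congr_fun h1 f).symm

end Aux

/-- the algebra homomorphism `Φ : K⟨X⟩ → Mₙ(Ω)` sending the variable `x_{h,i}`
to the generic matrix `A_i^{(h)}` has kernel exactly `T_G(Mₙ(K))` and range the algebra `F`
generated by the generic matrices; hence `K⟨X⟩/T_G(Mₙ(K)) ≅ F`. In particular the graded
identities of `F` (substitutions by homogeneous elements of `F`) coincide with those of
`Mₙ(K)`. -/
theorem relatively_free_algebra_iso_generic_matrices
    (K : Type*) [Field K] [Infinite K] {G : Type*} [Group G] [DecidableEq G] {n : ℕ}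
    (g : Fin n → G) (hg : Function.Injective g) :
    ∃ Φ : FreeGr K G →ₐ[K] Matrix (Fin n) (Fin n) (MvPolynomial (G × ℕ × Fin n) K),
      (∀ p : G × ℕ,
        Φ (MonoidAlgebra.of K (FreeMonoid (G × ℕ)) (FreeMonoid.of p)) =
          genMat (K := K) g p.1 p.2) ∧
      (∀ f : FreeGr K G, Φ f = 0 ↔ f ∈ TGIdeal K g) ∧
      Φ.range =
        Algebra.adjoin K (Set.range fun p : G × ℕ => genMat (K := K) g p.1 p.2) ∧
      {f : FreeGr K G |
        ∀ v : G × ℕ → Matrix (Fin n) (Fin n) (MvPolynomial (G × ℕ × Fin n) K),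
          (∀ p : G × ℕ,
            v p ∈ Algebra.adjoin K (Set.range fun p : G × ℕ => genMat (K := K) g p.1 p.2) ∧
            ∀ k l : Fin n, g k * p.1 ≠ g l → v p k l = 0) →
          (MonoidAlgebra.lift K
            (Matrix (Fin n) (Fin n) (MvPolynomial (G × ℕ × Fin n) K)) (FreeMonoid (G × ℕ))
            (FreeMonoid.lift v)) f = 0} = TGIdeal K g := by
  classical
  set Φ : FreeGr K G →ₐ[K] Matrix (Fin n) (Fin n) (MvPolynomial (G × ℕ × Fin n) K) :=
    MonoidAlgebra.lift K _ (FreeMonoid (G × ℕ))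
      (FreeMonoid.lift fun p : G × ℕ => genMat (K := K) g p.1 p.2) with hΦ
  have hgen : ∀ p : G × ℕ,
      Φ (MonoidAlgebra.of K (FreeMonoid (G × ℕ)) (FreeMonoid.of p)) =
        genMat (K := K) g p.1 p.2 :=
    fun p => by rw [hΦ, MonoidAlgebra.lift_of, FreeMonoid.lift_eval_of]
  have hker : ∀ f : FreeGr K G, Φ f = 0 ↔ f ∈ TGIdeal K g := by
    intro f
    constructor
    · intro h0 v hv
      rw [key_aux K g hg v (fun p => support_of_mem_elemComp K g (hv p)) f]
      rw [hΦ] at h0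
      rw [h0, map_zero]
    · intro hf
      refine Matrix.ext fun k l => ?_
      rw [Matrix.zero_apply]
      apply MvPolynomial.funext
      intro x
      rw [map_zero]
      set v : G × ℕ → Matrix (Fin n) (Fin n) K :=
        fun p => Matrix.of fun k l => if g k * p.1 = g l then x (p.1, p.2, k) else 0 with hv
      have hsupp : ∀ p : G × ℕ, ∀ k l, g k * p.1 ≠ g l → v p k l = 0 := by
        intro p k l hkl; simp [hv, if_neg hkl]
      have hmem : ∀ p : G × ℕ, v p ∈ elemComp K g p.1 :=
        fun p => mem_elemComp_of_support K g _ (hsupp p)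
      have h1 := lift_comp_aux K
        ((MvPolynomial.aeval x : MvPolynomial (G × ℕ × Fin n) K →ₐ[K] K).mapMatrix)
        (fun p : G × ℕ => genMat (K := K) g p.1 p.2)
      have h2 : (fun p : G × ℕ =>
          ((MvPolynomial.aeval x : MvPolynomial (G × ℕ × Fin n) K →ₐ[K] K).mapMatrix)
            (genMat (K := K) g p.1 p.2)) = v := by
        funext p
        ext k' l'
        simp [hv, genMat, apply_ite (MvPolynomial.aeval (R := K) x), apply_ite (MvPolynomial.eval x)]
      rw [h2] at h1
      have h4 : ((MvPolynomial.aeval x : MvPolynomial (G × ℕ × Fin n) K →ₐ[K] K).mapMatrix)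
          (Φ f) = 0 := by
        have h3 := DFunLike.congr_fun h1 f
        simp only [AlgHom.coe_comp, Function.comp_apply] at h3
        rw [hΦ, h3]
        exact hf v hmem
      have h5 : ((MvPolynomial.aeval x : MvPolynomial (G × ℕ × Fin n) K →ₐ[K] K).mapMatrix)
          (Φ f) k l = 0 := by rw [h4]; exact Matrix.zero_apply k l
      have h6 := DFunLike.congr_fun (MvPolynomial.coe_aeval_eq_eval (f := x)) (Φ f k l)
      rw [← h6]
      simpa [AlgHom.mapMatrix_apply, Matrix.map_apply] using h5
  refine ⟨Φ, hgen, hker, ?_, ?_⟩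
  · rw [← Algebra.map_top, ← adjoin_vars_eq_top K, AlgHom.map_adjoin, ← Set.range_comp]
    have hcomp : (⇑Φ ∘ fun p : G × ℕ =>
        MonoidAlgebra.of K (FreeMonoid (G × ℕ)) (FreeMonoid.of p)) =
        fun p : G × ℕ => genMat (K := K) g p.1 p.2 := funext hgen
    rw [hcomp]
  · ext f
    constructor
    · intro hf
      apply (hker f).mp
      rw [hΦ]
      apply hf (fun p : G × ℕ => genMat (K := K) g p.1 p.2)
      intro p
      refine ⟨Algebra.subset_adjoin ⟨p, rfl⟩, ?_⟩
      intro k l hkl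
      simp [genMat, if_neg hkl]
    · intro hf v hv
      rw [key_aux K g hg v (fun p => (hv p).2) f]
      have h0 := (hker f).mpr hf
      rw [hΦ] at h0
      rw [h0, map_zero]
end

section
/- Let m and n be multilinear graded monomials in distinct variables x_1,...,x_q whose generic matrix evaluations m(A_1,...,A_q) and n(A_1,...,A_q) have the same nonzero entry in the same position. If additionally m and n begin with the same variable, then writing m = x_{i_1} m' and n = x_{i_1} n', the evaluations m'(A_1,...,A_q) and n'(A_1,...,A_q) have the same nonzero entry in the same position, and the degree (in G) of m equals the degree of n. -/
lemma evalWord_cons_apply {K : Type*} [Field K] {G : Type*} [Group G] [DecidableEq G] {n : ℕ}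
    (g : Fin n → G) (p : G × ℕ) (w : List (G × ℕ)) (k l : Fin n) :
    evalWord K g (p :: w) k l
      = ∑ j, (if g k * p.1 = g j then MvPolynomial.X (p.1, p.2, k) else 0)
          * evalWord K g w j l := by
  simp [evalWord, Matrix.mul_apply, genMat]

lemma evalWord_cons_eq {K : Type*} [Field K] {G : Type*} [Group G] [DecidableEq G] {n : ℕ}
    {g : Fin n → G} (hg : Function.Injective g) (p : G × ℕ) (w : List (G × ℕ))
    {k l j : Fin n} (hj : g k * p.1 = g j) :
    evalWord K g (p :: w) k l = MvPolynomial.X (p.1, p.2, k) * evalWord K g w j l := by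
  rw [evalWord_cons_apply, Finset.sum_eq_single j]
  · rw [if_pos hj]
  · intro b _ hb
    rw [if_neg, zero_mul]
    intro hc
    exact hb (hg (hc.symm.trans hj))
  · simp

lemma evalWord_ne_zero_deg {K : Type*} [Field K] {G : Type*} [Group G] [DecidableEq G] {n : ℕ}
    {g : Fin n → G} (hg : Function.Injective g) (w : List (G × ℕ)) :
    ∀ k l : Fin n, evalWord K g w k l ≠ 0 → g k * (w.map Prod.fst).prod = g l := by
  induction w with
  | nil =>
    intro k l h
    simp only [evalWord, List.map_nil, List.prod_nil, Matrix.one_apply] at h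
    by_cases hkl : k = l
    · subst hkl; simp
    · simp [hkl] at h
  | cons p w ih =>
    intro k l h
    rw [evalWord_cons_apply] at h
    obtain ⟨j, -, hj⟩ := Finset.exists_ne_zero_of_sum_ne_zero h
    have hgj : g k * p.1 = g j := by
      by_contra hc; simp [hc] at hj
    have hw : evalWord K g w j l ≠ 0 := fun h0 => hj (by simp [h0])
    rw [List.map_cons, List.prod_cons, ← mul_assoc, hgj, ih j l hw]

/-- let `m = x_{i₁} m'` and `n = x_{i₁} n'` be multilinear graded monomials
(words with pairwise distinct variable indices) beginning with the same variable, whose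
generic-matrix evaluations share the same nonzero entry in the same position. Then the
evaluations of the tails `m'` and `n'` also share a common nonzero entry, and the `G`-degrees
of `m` and `n` coincide. -/
theorem tail_same_entry_and_same_degree
    (K : Type*) [Field K] [Infinite K] {G : Type*} [Group G] [DecidableEq G] {n : ℕ}
    (g : Fin n → G) (hg : Function.Injective g)
    (p : G × ℕ) (m' n' : List (G × ℕ))
    (hm : ((p :: m').map Prod.snd).Nodup) (hn : ((p :: n').map Prod.snd).Nodup)
    (hexists : ∃ k l : Fin n,
      evalWord K g (p :: m') k l = evalWord K g (p :: n') k l ∧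
      evalWord K g (p :: m') k l ≠ 0) :
    (∃ k l : Fin n,
      evalWord K g m' k l = evalWord K g n' k l ∧ evalWord K g m' k l ≠ 0) ∧
    ((p :: m').map Prod.fst).prod = ((p :: n').map Prod.fst).prod := by
  obtain ⟨k, l, heq, hne⟩ := hexists
  have h1 := hne
  rw [evalWord_cons_apply] at h1
  obtain ⟨j, -, hj⟩ := Finset.exists_ne_zero_of_sum_ne_zero h1
  have hgj : g k * p.1 = g j := by
    by_contra hc; simp [hc] at hj
  have hm'ne : evalWord K g m' j l ≠ 0 := fun h0 => hj (by simp [h0])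
  have em : evalWord K g (p :: m') k l
      = MvPolynomial.X (p.1, p.2, k) * evalWord K g m' j l := evalWord_cons_eq hg p m' hgj
  have en : evalWord K g (p :: n') k l
      = MvPolynomial.X (p.1, p.2, k) * evalWord K g n' j l := evalWord_cons_eq hg p n' hgj
  have hXne : (MvPolynomial.X (p.1, p.2, k) : MvPolynomial (G × ℕ × Fin n) K) ≠ 0 :=
    MvPolynomial.X_ne_zero _
  have hMN : evalWord K g m' j l = evalWord K g n' j l :=
    mul_left_cancel₀ hXne (by rw [← em, ← en]; exact heq)
  refine ⟨⟨j, l, hMN, hm'ne⟩, ?_⟩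
  have d1 := evalWord_ne_zero_deg hg (p :: m') k l hne
  have d2 := evalWord_ne_zero_deg hg (p :: n') k l (by rw [← heq]; exact hne)
  exact mul_left_cancel (d1.trans d2.symm)
end
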